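/- Under the permutation null distribution, for all integers 0 ≤ t1 < t2 ≤ n, the covariance of U1^π(t1,t2) and U2^π(t1,t2) equals A(t2 − t1)·((r_d² − r0²) − 2(n−1)(r1² − r0²)). -/

import Mathlib

open Finset

namespace RING

/-- `U1^π(t1,t2)`: sum of `R (π i) (π j)` over indices (1-based `i,j ∈ {1,…,n}`,
represented by `Fin n` with `i` standing for index `i+1`) with `t1 < i ≤ t2` and
`t1 < j ≤ t2`. -/
noncomputable def U1 (n : ℕ) (R : Fin n → Fin n → ℝ) (π : Equiv.Perm (Fin n))
    (t1 t2 : ℕ) : ℝ :=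
  ∑ i : Fin n, ∑ j : Fin n,
    if t1 ≤ (i : ℕ) ∧ (i : ℕ) < t2 ∧ t1 ≤ (j : ℕ) ∧ (j : ℕ) < t2 then R (π i) (π j) else 0

/-- `U2^π(t1,t2)`: sum of `R (π i) (π j)` over indices with `i ≤ t1` or `i > t2`,
and `j ≤ t1` or `j > t2`. -/
noncomputable def U2 (n : ℕ) (R : Fin n → Fin n → ℝ) (π : Equiv.Perm (Fin n))
    (t1 t2 : ℕ) : ℝ :=
  ∑ i : Fin n, ∑ j : Fin n,
    if ((i : ℕ) < t1 ∨ t2 ≤ (i : ℕ)) ∧ ((j : ℕ) < t1 ∨ t2 ≤ (j : ℕ)) then R (π i) (π j) else 0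

/-- Expectation under the permutation null distribution (uniform over all `n!`
permutations). -/
noncomputable def pexp (n : ℕ) (f : Equiv.Perm (Fin n) → ℝ) : ℝ :=
  (∑ π : Equiv.Perm (Fin n), f π) / (Nat.factorial n)

/-- Variance under the permutation null distribution. -/
noncomputable def pvar (n : ℕ) (f : Equiv.Perm (Fin n) → ℝ) : ℝ :=
  pexp n (fun π => (f π - pexp n f) ^ 2)

/-- Covariance under the permutation null distribution. -/
noncomputable def pcov (n : ℕ) (f g : Equiv.Perm (Fin n) → ℝ) : ℝ :=
  pexp n (fun π => (f π - pexp n f) * (g π - pexp n g))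

/-- `R̄_{i·} = (Σ_j R_{ij})/(n-1)`. -/
noncomputable def Rbar (n : ℕ) (R : Fin n → Fin n → ℝ) (i : Fin n) : ℝ :=
  (∑ j : Fin n, R i j) / ((n : ℝ) - 1)

/-- `r0 = (1/n) Σ_i R̄_{i·}`. -/
noncomputable def r0 (n : ℕ) (R : Fin n → Fin n → ℝ) : ℝ :=
  (∑ i : Fin n, Rbar n R i) / n

/-- `r1² = (1/n) Σ_i R̄_{i·}²`. -/
noncomputable def r1sq (n : ℕ) (R : Fin n → Fin n → ℝ) : ℝ :=
  (∑ i : Fin n, (Rbar n R i) ^ 2) / n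

/-- `r_d² = (1/(n(n-1))) Σ_i Σ_j R_{ij}²`. -/
noncomputable def rdsq (n : ℕ) (R : Fin n → Fin n → ℝ) : ℝ :=
  (∑ i : Fin n, ∑ j : Fin n, (R i j) ^ 2) / ((n : ℝ) * ((n : ℝ) - 1))

/-- `A(t) = 2t(t-1)(n-t)(n-t-1)/((n-2)(n-3))`. -/
noncomputable def A (n t : ℕ) : ℝ :=
  2 * (t : ℝ) * ((t : ℝ) - 1) * ((n : ℝ) - t) * ((n : ℝ) - t - 1) /
    (((n : ℝ) - 2) * ((n : ℝ) - 3))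

/-- `B(t) = 4t(n-t)(t-1)(t-2)(n-1)/((n-2)(n-3))`. -/
noncomputable def B (n t : ℕ) : ℝ :=
  4 * (t : ℝ) * ((n : ℝ) - t) * ((t : ℝ) - 1) * ((t : ℝ) - 2) * ((n : ℝ) - 1) /
    (((n : ℝ) - 2) * ((n : ℝ) - 3))

/-- `U_diff^π = U1^π − U2^π`. -/
noncomputable def Udiff (n : ℕ) (R : Fin n → Fin n → ℝ) (π : Equiv.Perm (Fin n))
    (t1 t2 : ℕ) : ℝ :=
  U1 n R π t1 t2 - U2 n R π t1 t2

/-- `U_w^π = ((n−t2+t1−1)·U1^π + (t2−t1−1)·U2^π)/(n−2)`. -/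
noncomputable def Uw (n : ℕ) (R : Fin n → Fin n → ℝ) (π : Equiv.Perm (Fin n))
    (t1 t2 : ℕ) : ℝ :=
  (((n : ℝ) - t2 + t1 - 1) * U1 n R π t1 t2 + ((t2 : ℝ) - t1 - 1) * U2 n R π t1 t2) /
    ((n : ℝ) - 2)

/-- Standardized `Z_w^π(t1,t2)`. -/
noncomputable def Zw (n : ℕ) (R : Fin n → Fin n → ℝ) (π : Equiv.Perm (Fin n))
    (t1 t2 : ℕ) : ℝ :=
  (Uw n R π t1 t2 - pexp n (fun σ => Uw n R σ t1 t2)) /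
    Real.sqrt (pvar n (fun σ => Uw n R σ t1 t2))

/-- Standardized `Z_diff^π(t1,t2)`. -/
noncomputable def Zdiff (n : ℕ) (R : Fin n → Fin n → ℝ) (π : Equiv.Perm (Fin n))
    (t1 t2 : ℕ) : ℝ :=
  (Udiff n R π t1 t2 - pexp n (fun σ => Udiff n R σ t1 t2)) /
    Real.sqrt (pvar n (fun σ => Udiff n R σ t1 t2))

end RING

open RING

namespace StmtAux4

open Finset Equiv

variable {n : ℕ}




lemma exists_perm_extend {m : ℕ} (v w : Fin m → Fin n) (hv : Function.Injective v)
    (hw : Function.Injective w) : ∃ σ : Equiv.Perm (Fin n), ∀ k, σ (v k) = w k := by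
  classical
  let e : {x // x ∈ Set.range v} ≃ {x // x ∈ Set.range w} :=
    ((Equiv.ofInjective v hv).symm.trans (Equiv.ofInjective w hw))
  refine ⟨e.extendSubtype, fun k => ?_⟩
  have hm : v k ∈ Set.range v := ⟨k, rfl⟩
  rw [e.extendSubtype_apply_of_mem _ hm]
  show ((Equiv.ofInjective w hw) ((Equiv.ofInjective v hv).symm ⟨v k, hm⟩) : Fin n) = w k
  have : (Equiv.ofInjective v hv).symm ⟨v k, hm⟩ = k := by
    apply (Equiv.ofInjective v hv).injective
    simp only [Equiv.ofInjective, Equiv.apply_symm_apply]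
    exact Subtype.ext rfl
  rw [this]
  rfl

lemma sum_perm_mul (σ : Equiv.Perm (Fin n)) (f : Equiv.Perm (Fin n) → ℝ) :
    ∑ π : Equiv.Perm (Fin n), f (π * σ) = ∑ π : Equiv.Perm (Fin n), f π :=
  Fintype.sum_equiv (Equiv.mulRight σ) _ _ (fun _ => rfl)

lemma sum_if_card (p : Fin n → Prop) [DecidablePred p] (c : ℝ) :
    ∑ x : Fin n, (if p x then c else 0) = (univ.filter p).card * c := by
  rw [Finset.sum_ite, Finset.sum_const, Finset.sum_const_zero, add_zero, nsmul_eq_mul]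

lemma card_filter_ne (s : Finset (Fin n)) (p : Fin n → Prop) [DecidablePred p]
    (hp : ∀ x, p x ↔ x ∉ s) : (univ.filter p).card = n - s.card := by
  have h : univ.filter p = sᶜ := by ext x; simp [hp]
  rw [h, Finset.card_compl, Fintype.card_fin]

lemma pair_const (R : Fin n → Fin n → ℝ) (i j i' j' : Fin n) (hij : i ≠ j) (h : i' ≠ j') :
    ∑ π : Equiv.Perm (Fin n), R (π i') (π j') = ∑ π : Equiv.Perm (Fin n), R (π i) (π j) := by
  have hv : Function.Injective ![i, j] := by
    intro a b hab
    fin_cases a <;> fin_cases b <;> simp_all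
  have hw : Function.Injective ![i', j'] := by
    intro a b hab
    fin_cases a <;> fin_cases b <;> simp_all
  obtain ⟨σ, hσ⟩ := exists_perm_extend ![i, j] ![i', j'] hv hw
  have h0 : σ i = i' := hσ 0
  have h1 : σ j = j' := hσ 1
  calc ∑ π : Equiv.Perm (Fin n), R (π i') (π j')
      = ∑ π : Equiv.Perm (Fin n), R ((π * σ) i) ((π * σ) j) := by
        refine Finset.sum_congr rfl fun π _ => ?_
        simp [Equiv.Perm.mul_apply, h0, h1]
    _ = ∑ π : Equiv.Perm (Fin n), R (π i) (π j) :=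
        sum_perm_mul σ (fun π => R (π i) (π j))

lemma c2_eq (R : Fin n → Fin n → ℝ) (hdiag : ∀ i, R i i = 0) (i j : Fin n) (hij : i ≠ j) :
    ((n : ℝ) * ((n : ℝ) - 1)) * ∑ π : Equiv.Perm (Fin n), R (π i) (π j)
      = (n.factorial : ℝ) * (∑ x : Fin n, ∑ y : Fin n, R x y) := by
  set C := ∑ π : Equiv.Perm (Fin n), R (π i) (π j) with hC
  have key : (n.factorial : ℝ) * (∑ x : Fin n, ∑ y : Fin n, R x y)
      = ∑ x : Fin n, ∑ y : Fin n, (if x = y then (0:ℝ) else C) := by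
    calc (n.factorial : ℝ) * (∑ x : Fin n, ∑ y : Fin n, R x y)
        = ∑ _π : Equiv.Perm (Fin n), (∑ x : Fin n, ∑ y : Fin n, R x y) := by
          rw [Finset.sum_const, nsmul_eq_mul, Finset.card_univ, Fintype.card_perm,
            Fintype.card_fin]
      _ = ∑ π : Equiv.Perm (Fin n), (∑ x : Fin n, ∑ y : Fin n, R (π x) (π y)) := by
          refine Finset.sum_congr rfl fun π _ => ?_
          rw [show (∑ x : Fin n, ∑ y : Fin n, R (π x) (π y))
              = ∑ x : Fin n, ∑ y : Fin n, R (π x) y from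
            Finset.sum_congr rfl fun x _ => Equiv.sum_comp π (fun y => R (π x) y)]
          exact (Equiv.sum_comp π (fun x => ∑ y : Fin n, R x y)).symm
      _ = ∑ x : Fin n, ∑ y : Fin n, ∑ π : Equiv.Perm (Fin n), R (π x) (π y) := by
          rw [Finset.sum_comm]
          exact Finset.sum_congr rfl fun x _ => Finset.sum_comm
      _ = ∑ x : Fin n, ∑ y : Fin n, (if x = y then (0:ℝ) else C) := by
          refine Finset.sum_congr rfl fun x _ => Finset.sum_congr rfl fun y _ => ?_
          split_ifs with h
          · subst h; simp [hdiag]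
          · exact pair_const R i j x y hij h
  rw [key]
  have inner : ∀ x : Fin n, ∑ y : Fin n, (if x = y then (0:ℝ) else C) = ((n:ℝ) - 1) * C := by
    intro x
    have : ∀ y : Fin n, (if x = y then (0:ℝ) else C) = if x ≠ y then C else 0 := by
      intro y; split_ifs <;> simp_all
    simp only [this]
    rw [sum_if_card (fun y => x ≠ y) C,
        card_filter_ne {x} (fun y => x ≠ y) (by intro y; simp [eq_comm])]
    have hx : (1:ℕ) ≤ n := Nat.one_le_iff_ne_zero.2 (by rintro rfl; exact absurd x.2 (by simp))
    rw [Finset.card_singleton, Nat.cast_sub hx]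
    push_cast; ring
  simp only [inner, Finset.sum_const, nsmul_eq_mul, Finset.card_univ, Fintype.card_fin]
  ring


def D (i j k l : Fin n) : Prop := i ≠ j ∧ i ≠ k ∧ i ≠ l ∧ j ≠ k ∧ j ≠ l ∧ k ≠ l

instance (i j k l : Fin n) : Decidable (D i j k l) := by unfold D; infer_instance

noncomputable def S4 (R : Fin n → Fin n → ℝ) : ℝ :=
  ∑ i : Fin n, ∑ j : Fin n, ∑ k : Fin n, ∑ l : Fin n,
    if D i j k l then R i j * R k l else 0

lemma quad_const (R : Fin n → Fin n → ℝ) (i j k l i' j' k' l' : Fin n)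
    (h : D i j k l) (h' : D i' j' k' l') :
    ∑ π : Equiv.Perm (Fin n), R (π i') (π j') * R (π k') (π l')
      = ∑ π : Equiv.Perm (Fin n), R (π i) (π j) * R (π k) (π l) := by
  obtain ⟨h1, h2, h3, h4, h5, h6⟩ := h
  obtain ⟨g1, g2, g3, g4, g5, g6⟩ := h'
  have hv : Function.Injective ![i, j, k, l] := by
    intro a b hab; fin_cases a <;> fin_cases b <;> simp_all
  have hw : Function.Injective ![i', j', k', l'] := by
    intro a b hab; fin_cases a <;> fin_cases b <;> simp_all
  obtain ⟨σ, hσ⟩ := exists_perm_extend ![i, j, k, l] ![i', j', k', l'] hv hw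
  calc ∑ π : Equiv.Perm (Fin n), R (π i') (π j') * R (π k') (π l')
      = ∑ π : Equiv.Perm (Fin n), R ((π * σ) i) ((π * σ) j) * R ((π * σ) k) ((π * σ) l) := by
        refine Finset.sum_congr rfl fun π _ => ?_
        have e0 : σ i = i' := hσ 0
        have e1 : σ j = j' := hσ 1
        have e2 : σ k = k' := hσ 2
        have e3 : σ l = l' := hσ 3
        simp [Equiv.Perm.mul_apply, e0, e1, e2, e3]
    _ = ∑ π : Equiv.Perm (Fin n), R (π i) (π j) * R (π k) (π l) :=
        sum_perm_mul σ (fun π => R (π i) (π j) * R (π k) (π l))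

lemma quad_count (hn : 4 ≤ n) :
    (∑ i : Fin n, ∑ j : Fin n, ∑ k : Fin n, ∑ l : Fin n,
      if D i j k l then (1:ℝ) else 0)
      = (n:ℝ) * ((n:ℝ) - 1) * ((n:ℝ) - 2) * ((n:ℝ) - 3) := by
  have hcast : ∀ m : ℕ, m ≤ n → ((n - m : ℕ) : ℝ) = (n : ℝ) - m := by
    intro m hm; rw [Nat.cast_sub hm]
  have hL : ∀ i j k : Fin n, (∑ l : Fin n, if D i j k l then (1:ℝ) else 0)
      = if i ≠ j ∧ i ≠ k ∧ j ≠ k then ((n:ℝ) - 3) else 0 := by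
    intro i j k
    by_cases h : i ≠ j ∧ i ≠ k ∧ j ≠ k
    · rw [if_pos h]
      have : ∀ l : Fin n, (if D i j k l then (1:ℝ) else 0)
          = if l ∉ ({i, j, k} : Finset (Fin n)) then (1:ℝ) else 0 := by
        intro l
        refine if_congr ?_ rfl rfl
        unfold D
        simp only [Finset.mem_insert, Finset.mem_singleton, not_or]
        constructor
        · rintro ⟨_, _, h3, _, h5, h6⟩; exact ⟨Ne.symm h3, Ne.symm h5, Ne.symm h6⟩
        · rintro ⟨a1, a2, a3⟩; exact ⟨h.1, h.2.1, Ne.symm a1, h.2.2, Ne.symm a2, Ne.symm a3⟩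
      simp only [this]
      rw [sum_if_card _ _, card_filter_ne {i, j, k} _ (fun x => Iff.rfl)]
      have hc : ({i, j, k} : Finset (Fin n)).card = 3 := by
        rw [Finset.card_insert_of_notMem (by simp [h.1, h.2.1]),
          Finset.card_insert_of_notMem (by simp [h.2.2]), Finset.card_singleton]
      rw [hc, hcast 3 (by omega)]
      ring
    · rw [if_neg h]
      refine Finset.sum_eq_zero fun l _ => ?_
      rw [if_neg]
      unfold D; tauto
  have hK : ∀ i j : Fin n, (∑ k : Fin n, if i ≠ j ∧ i ≠ k ∧ j ≠ k then ((n:ℝ) - 3) else 0)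
      = if i ≠ j then ((n:ℝ) - 2) * ((n:ℝ) - 3) else 0 := by
    intro i j
    by_cases h : i ≠ j
    · rw [if_pos h]
      have : ∀ k : Fin n, (if i ≠ j ∧ i ≠ k ∧ j ≠ k then ((n:ℝ) - 3) else 0)
          = if k ∉ ({i, j} : Finset (Fin n)) then ((n:ℝ) - 3) else 0 := by
        intro k
        refine if_congr ?_ rfl rfl
        simp only [Finset.mem_insert, Finset.mem_singleton, not_or]
        constructor
        · rintro ⟨_, h2, h3⟩; exact ⟨Ne.symm h2, Ne.symm h3⟩
        · rintro ⟨a1, a2⟩; exact ⟨h, Ne.symm a1, Ne.symm a2⟩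
      simp only [this]
      rw [sum_if_card _ _, card_filter_ne {i, j} _ (fun x => Iff.rfl)]
      have hc : ({i, j} : Finset (Fin n)).card = 2 := by
        rw [Finset.card_insert_of_notMem (by simp [h]), Finset.card_singleton]
      rw [hc, hcast 2 (by omega)]
      norm_num
    · rw [if_neg h]
      refine Finset.sum_eq_zero fun k _ => ?_
      rw [if_neg]; tauto
  have hJ : ∀ i : Fin n, (∑ j : Fin n, if i ≠ j then ((n:ℝ) - 2) * ((n:ℝ) - 3) else 0)
      = ((n:ℝ) - 1) * (((n:ℝ) - 2) * ((n:ℝ) - 3)) := by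
    intro i
    have : ∀ j : Fin n, (if i ≠ j then ((n:ℝ) - 2) * ((n:ℝ) - 3) else 0)
        = if j ∉ ({i} : Finset (Fin n)) then ((n:ℝ) - 2) * ((n:ℝ) - 3) else 0 := by
      intro j
      refine if_congr ?_ rfl rfl
      simp [eq_comm]
    simp only [this]
    rw [sum_if_card _ _, card_filter_ne {i} _ (fun x => Iff.rfl),
      Finset.card_singleton, hcast 1 (by omega)]
    norm_num
  simp only [hL, hK, hJ, Finset.sum_const, nsmul_eq_mul, Finset.card_univ, Fintype.card_fin]
  ring

lemma c4_eq (hn : 4 ≤ n) (R : Fin n → Fin n → ℝ) (i j k l : Fin n) (h : D i j k l) :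
    ((n:ℝ) * ((n:ℝ) - 1) * ((n:ℝ) - 2) * ((n:ℝ) - 3))
        * ∑ π : Equiv.Perm (Fin n), R (π i) (π j) * R (π k) (π l)
      = (n.factorial : ℝ) * S4 R := by
  classical
  set C := ∑ π : Equiv.Perm (Fin n), R (π i) (π j) * R (π k) (π l) with hC
  have key : (n.factorial : ℝ) * S4 R
      = ∑ x : Fin n, ∑ y : Fin n, ∑ z : Fin n, ∑ w : Fin n,
          if D x y z w then C else 0 := by
    have hπ : ∀ π : Equiv.Perm (Fin n), S4 R
        = ∑ x : Fin n, ∑ y : Fin n, ∑ z : Fin n, ∑ w : Fin n,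
            (if D x y z w then R (π x) (π y) * R (π z) (π w) else 0) := by
      intro π
      have hD : ∀ x y z w : Fin n, D x y z w ↔ D (π x) (π y) (π z) (π w) := by
        intro x y z w; unfold D
        simp [ne_eq, EmbeddingLike.apply_eq_iff_eq]
      have e1 : ∀ x y z w : Fin n,
          (if D x y z w then R (π x) (π y) * R (π z) (π w) else 0)
          = (fun a b c d => if D a b c d then R a b * R c d else 0)
              (π x) (π y) (π z) (π w) := by
        intro x y z w; exact if_congr (hD x y z w) rfl rfl
      simp only [e1]
      set H : Fin n → Fin n → Fin n → Fin n → ℝ :=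
        fun a b c d => if D a b c d then R a b * R c d else 0 with hH
      have s1 : ∀ x y z : Fin n, ∑ w : Fin n, H (π x) (π y) (π z) (π w)
          = ∑ w : Fin n, H (π x) (π y) (π z) w := fun x y z =>
        Equiv.sum_comp π (fun w => H (π x) (π y) (π z) w)
      have s2 : ∀ x y : Fin n, ∑ z : Fin n, ∑ w : Fin n, H (π x) (π y) (π z) w
          = ∑ z : Fin n, ∑ w : Fin n, H (π x) (π y) z w := fun x y =>
        Equiv.sum_comp π (fun z => ∑ w : Fin n, H (π x) (π y) z w)
      have s3 : ∀ x : Fin n, ∑ y : Fin n, ∑ z : Fin n, ∑ w : Fin n, H (π x) (π y) z w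
          = ∑ y : Fin n, ∑ z : Fin n, ∑ w : Fin n, H (π x) y z w := fun x =>
        Equiv.sum_comp π (fun y => ∑ z : Fin n, ∑ w : Fin n, H (π x) y z w)
      have s4 : ∑ x : Fin n, ∑ y : Fin n, ∑ z : Fin n, ∑ w : Fin n, H (π x) y z w
          = ∑ x : Fin n, ∑ y : Fin n, ∑ z : Fin n, ∑ w : Fin n, H x y z w :=
        Equiv.sum_comp π (fun x => ∑ y : Fin n, ∑ z : Fin n, ∑ w : Fin n, H x y z w)
      show S4 R = ∑ x : Fin n, ∑ y : Fin n, ∑ z : Fin n, ∑ w : Fin n, H (π x) (π y) (π z) (π w)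
      simp only [s1, s2, s3]
      rw [s4]
      rfl
    calc (n.factorial : ℝ) * S4 R = ∑ _π : Equiv.Perm (Fin n), S4 R := by
          rw [Finset.sum_const, nsmul_eq_mul, Finset.card_univ, Fintype.card_perm,
            Fintype.card_fin]
      _ = ∑ π : Equiv.Perm (Fin n), ∑ x : Fin n, ∑ y : Fin n, ∑ z : Fin n, ∑ w : Fin n,
            (if D x y z w then R (π x) (π y) * R (π z) (π w) else 0) :=
          Finset.sum_congr rfl fun π _ => hπ π
      _ = ∑ x : Fin n, ∑ y : Fin n, ∑ z : Fin n, ∑ w : Fin n,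
            ∑ π : Equiv.Perm (Fin n),
            (if D x y z w then R (π x) (π y) * R (π z) (π w) else 0) := by
          rw [Finset.sum_comm]
          refine Finset.sum_congr rfl fun x _ => ?_
          rw [Finset.sum_comm]
          refine Finset.sum_congr rfl fun y _ => ?_
          rw [Finset.sum_comm]
          refine Finset.sum_congr rfl fun z _ => ?_
          rw [Finset.sum_comm]
      _ = ∑ x : Fin n, ∑ y : Fin n, ∑ z : Fin n, ∑ w : Fin n,
            if D x y z w then C else 0 := by
          refine Finset.sum_congr rfl fun x _ => Finset.sum_congr rfl fun y _ =>
            Finset.sum_congr rfl fun z _ => Finset.sum_congr rfl fun w _ => ?_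
          split_ifs with hd
          · exact quad_const R i j k l x y z w h hd
          · simp
  rw [key]
  have : ∀ x y z w : Fin n, (if D x y z w then C else 0)
      = (if D x y z w then (1:ℝ) else 0) * C := by
    intro x y z w; split_ifs <;> ring
  simp only [this, ← Finset.sum_mul]
  rw [quad_count hn]

lemma sum_notmem (s : Finset (Fin n)) (f : Fin n → ℝ) :
    ∑ l : Fin n, (if l ∉ s then f l else 0) = (∑ l : Fin n, f l) - ∑ l ∈ s, f l := by
  classical
  have h1 : ∑ l : Fin n, (if l ∉ s then f l else 0) = ∑ l ∈ sᶜ, f l := by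
    rw [show (fun l => if l ∉ s then f l else 0) = fun l => if l ∈ sᶜ then f l else 0 by
      funext l; simp]
    rw [Finset.sum_ite_mem, Finset.univ_inter]
  have h2 := Finset.sum_add_sum_compl s f
  rw [h1]; linarith

lemma S4_identity (R : Fin n → Fin n → ℝ) (hsym : ∀ i j, R i j = R j i)
    (hdiag : ∀ i, R i i = 0) :
    S4 R = (∑ x : Fin n, ∑ y : Fin n, R x y) ^ 2
      - 4 * (∑ x : Fin n, (∑ y : Fin n, R x y) ^ 2)
      + 2 * (∑ x : Fin n, ∑ y : Fin n, (R x y) ^ 2) := by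
  classical
  have hcol : ∀ i : Fin n, ∑ k : Fin n, R k i = ∑ y : Fin n, R i y := by
    intro i; exact Finset.sum_congr rfl fun k _ => hsym k i
  -- Step A: inner sum over l
  have stepA : ∀ i j k : Fin n,
      (∑ l : Fin n, if D i j k l then R i j * R k l else 0)
      = if i ≠ j ∧ i ≠ k ∧ j ≠ k then
          R i j * ((∑ y : Fin n, R k y) - R k i - R k j) else 0 := by
    intro i j k
    by_cases h : i ≠ j ∧ i ≠ k ∧ j ≠ k
    · rw [if_pos h]
      have e : ∀ l : Fin n, (if D i j k l then R i j * R k l else 0)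
          = if l ∉ ({i, j, k} : Finset (Fin n)) then R i j * R k l else 0 := by
        intro l
        refine if_congr ?_ rfl rfl
        unfold D
        simp only [Finset.mem_insert, Finset.mem_singleton, not_or]
        constructor
        · rintro ⟨_, _, h3, _, h5, h6⟩; exact ⟨Ne.symm h3, Ne.symm h5, Ne.symm h6⟩
        · rintro ⟨a1, a2, a3⟩; exact ⟨h.1, h.2.1, Ne.symm a1, h.2.2, Ne.symm a2, Ne.symm a3⟩
      simp only [e]
      rw [sum_notmem]
      have hset : ∑ l ∈ ({i, j, k} : Finset (Fin n)), R i j * R k l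
          = R i j * R k i + R i j * R k j + R i j * R k k := by
        rw [Finset.sum_insert (by simp [h.1, h.2.1]),
          Finset.sum_insert (by simp [h.2.2]), Finset.sum_singleton]
        ring
      rw [hset, hdiag k, ← Finset.mul_sum]
      ring
    · rw [if_neg h]
      refine Finset.sum_eq_zero fun l _ => ?_
      rw [if_neg]; unfold D; tauto
  -- Step B: inner sum over k
  have stepB : ∀ i j : Fin n,
      (∑ k : Fin n, if i ≠ j ∧ i ≠ k ∧ j ≠ k then
          R i j * ((∑ y : Fin n, R k y) - R k i - R k j) else 0)
      = R i j * (∑ x : Fin n, ∑ y : Fin n, R x y)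
          - 2 * (R i j * (∑ y : Fin n, R i y))
          - 2 * (R i j * (∑ y : Fin n, R j y)) + 2 * (R i j) ^ 2 := by
    intro i j
    by_cases h : i = j
    · subst h
      rw [Finset.sum_eq_zero (fun k _ => by rw [if_neg]; tauto)]
      rw [hdiag i]; ring
    · have e : ∀ k : Fin n,
          (if i ≠ j ∧ i ≠ k ∧ j ≠ k then
            R i j * ((∑ y : Fin n, R k y) - R k i - R k j) else 0)
          = if k ∉ ({i, j} : Finset (Fin n)) then
            R i j * ((∑ y : Fin n, R k y) - R k i - R k j) else 0 := by
        intro k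
        refine if_congr ?_ rfl rfl
        simp only [Finset.mem_insert, Finset.mem_singleton, not_or]
        constructor
        · rintro ⟨_, h2, h3⟩; exact ⟨Ne.symm h2, Ne.symm h3⟩
        · rintro ⟨a1, a2⟩; exact ⟨h, Ne.symm a1, Ne.symm a2⟩
      simp only [e]
      rw [sum_notmem]
      have hsum : ∑ k : Fin n, R i j * ((∑ y : Fin n, R k y) - R k i - R k j)
          = R i j * ((∑ x : Fin n, ∑ y : Fin n, R x y)
              - (∑ y : Fin n, R i y) - (∑ y : Fin n, R j y)) := by
        rw [← Finset.mul_sum, Finset.sum_sub_distrib, Finset.sum_sub_distrib,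
          hcol i, hcol j]
      have hpair : ∑ k ∈ ({i, j} : Finset (Fin n)),
          R i j * ((∑ y : Fin n, R k y) - R k i - R k j)
          = R i j * ((∑ y : Fin n, R i y) - R i j)
            + R i j * ((∑ y : Fin n, R j y) - R i j) := by
        rw [Finset.sum_pair h, hdiag i, hdiag j, hsym j i]
        ring
      rw [hsum, hpair]
      ring
  -- assemble
  unfold S4
  simp only [stepA, stepB]
  have hA1 : ∑ i : Fin n, ∑ j : Fin n, R i j * (∑ x : Fin n, ∑ y : Fin n, R x y)
      = (∑ x : Fin n, ∑ y : Fin n, R x y) ^ 2 := by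
    simp only [← Finset.sum_mul]; rw [sq]
  have hA2 : ∑ i : Fin n, ∑ j : Fin n, (R i j * (∑ y : Fin n, R i y))
      = ∑ x : Fin n, (∑ y : Fin n, R x y) ^ 2 := by
    refine Finset.sum_congr rfl fun i _ => ?_
    rw [← Finset.sum_mul, sq]
  have hA3 : ∑ i : Fin n, ∑ j : Fin n, (R i j * (∑ y : Fin n, R j y))
      = ∑ x : Fin n, (∑ y : Fin n, R x y) ^ 2 := by
    rw [Finset.sum_comm]
    refine Finset.sum_congr rfl fun j _ => ?_
    rw [← Finset.sum_mul, hcol j, sq]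
  simp only [Finset.sum_add_distrib, Finset.sum_sub_distrib, ← Finset.mul_sum]
  rw [hA1, hA2, hA3]
  ring



-- counting pairs
lemma pair_count (p : Fin n → Prop) [DecidablePred p] (c : ℝ) :
    ∑ i : Fin n, ∑ j : Fin n, (if p i ∧ p j ∧ i ≠ j then c else 0)
      = ((univ.filter p).card : ℝ) * (((univ.filter p).card : ℝ) - 1) * c := by
  classical
  set m := (univ.filter p).card with hm
  have inner : ∀ i : Fin n, (∑ j : Fin n, if p i ∧ p j ∧ i ≠ j then c else 0)
      = if p i then ((m : ℝ) - 1) * c else 0 := by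
    intro i
    by_cases hp : p i
    · rw [if_pos hp]
      have e : ∀ j : Fin n, (if p i ∧ p j ∧ i ≠ j then c else 0)
          = if p j ∧ j ≠ i then c else 0 := by
        intro j
        refine if_congr ?_ rfl rfl
        constructor
        · rintro ⟨_, h2, h3⟩; exact ⟨h2, Ne.symm h3⟩
        · rintro ⟨h2, h3⟩; exact ⟨hp, h2, Ne.symm h3⟩
      simp only [e]
      rw [sum_if_card _ c]
      have heq : univ.filter (fun j => p j ∧ j ≠ i) = (univ.filter p).erase i := by
        ext x; simp [and_comm, Finset.mem_erase]
      rw [heq, Finset.card_erase_of_mem (by simp [hp])]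
      have hm1 : 1 ≤ m := Finset.card_pos.2 ⟨i, by simp [hp]⟩
      rw [Nat.cast_sub hm1, Nat.cast_one]
    · rw [if_neg hp]
      refine Finset.sum_eq_zero fun j _ => ?_
      rw [if_neg]; tauto
  simp only [inner]
  rw [sum_if_card p _]
  ring

lemma sum_perm_double (hn : 2 ≤ n) (R : Fin n → Fin n → ℝ) (hdiag : ∀ i, R i i = 0)
    (p : Fin n → Prop) [DecidablePred p] :
    (∑ π : Equiv.Perm (Fin n), ∑ i : Fin n, ∑ j : Fin n,
        if p i ∧ p j then R (π i) (π j) else 0)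
      = ((univ.filter p).card : ℝ) * (((univ.filter p).card : ℝ) - 1)
        * ((n.factorial : ℝ) * (∑ x : Fin n, ∑ y : Fin n, R x y)
            / ((n : ℝ) * ((n : ℝ) - 1))) := by
  classical
  have h2 : (2:ℝ) ≤ (n:ℝ) := by exact_mod_cast hn
  have hnn : (n : ℝ) * ((n : ℝ) - 1) ≠ 0 :=
    mul_ne_zero (ne_of_gt (by linarith)) (ne_of_gt (by linarith))
  set μ : ℝ := (n.factorial : ℝ) * (∑ x : Fin n, ∑ y : Fin n, R x y)
      / ((n : ℝ) * ((n : ℝ) - 1)) with hμ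
  calc (∑ π : Equiv.Perm (Fin n), ∑ i : Fin n, ∑ j : Fin n,
        if p i ∧ p j then R (π i) (π j) else 0)
      = ∑ i : Fin n, ∑ j : Fin n, ∑ π : Equiv.Perm (Fin n),
          (if p i ∧ p j then R (π i) (π j) else 0) := by
        rw [Finset.sum_comm]
        exact Finset.sum_congr rfl fun i _ => Finset.sum_comm
    _ = ∑ i : Fin n, ∑ j : Fin n, (if p i ∧ p j ∧ i ≠ j then μ else 0) := by
        refine Finset.sum_congr rfl fun i _ => Finset.sum_congr rfl fun j _ => ?_
        by_cases hij : i = j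
        · subst hij
          rw [if_neg (by tauto)]
          refine Finset.sum_eq_zero fun π _ => ?_
          split_ifs <;> simp [hdiag]
        · by_cases hp : p i ∧ p j
          · rw [if_pos ⟨hp.1, hp.2, hij⟩]
            have : ∀ π : Equiv.Perm (Fin n),
                (if p i ∧ p j then R (π i) (π j) else 0) = R (π i) (π j) := by
              intro π; rw [if_pos hp]
            simp only [this]
            rw [hμ, eq_div_iff hnn]
            linarith [c2_eq R hdiag i j hij]
          · rw [if_neg (by tauto)]
            refine Finset.sum_eq_zero fun π _ => ?_
            rw [if_neg (by tauto)]
    _ = _ := pair_count p μ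

lemma sum_perm_quad (hn : 4 ≤ n) (R : Fin n → Fin n → ℝ) (hdiag : ∀ i, R i i = 0)
    (p q : Fin n → Prop) [DecidablePred p] [DecidablePred q]
    (hpq : ∀ x, p x → q x → False) :
    (∑ π : Equiv.Perm (Fin n), ∑ i : Fin n, ∑ j : Fin n, ∑ k : Fin n, ∑ l : Fin n,
        if (p i ∧ p j) ∧ (q k ∧ q l) then R (π i) (π j) * R (π k) (π l) else 0)
      = ((univ.filter p).card : ℝ) * (((univ.filter p).card : ℝ) - 1)
        * (((univ.filter q).card : ℝ) * (((univ.filter q).card : ℝ) - 1))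
        * ((n.factorial : ℝ) * S4 R
            / ((n:ℝ) * ((n:ℝ) - 1) * ((n:ℝ) - 2) * ((n:ℝ) - 3))) := by
  classical
  have h4 : (4:ℝ) ≤ (n:ℝ) := by exact_mod_cast hn
  have hnn : (n:ℝ) * ((n:ℝ) - 1) * ((n:ℝ) - 2) * ((n:ℝ) - 3) ≠ 0 := by
    refine mul_ne_zero (mul_ne_zero (mul_ne_zero ?_ ?_) ?_) ?_ <;>
      exact ne_of_gt (by linarith)
  set ν : ℝ := (n.factorial : ℝ) * S4 R
      / ((n:ℝ) * ((n:ℝ) - 1) * ((n:ℝ) - 2) * ((n:ℝ) - 3)) with hν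
  calc (∑ π : Equiv.Perm (Fin n), ∑ i : Fin n, ∑ j : Fin n, ∑ k : Fin n, ∑ l : Fin n,
        if (p i ∧ p j) ∧ (q k ∧ q l) then R (π i) (π j) * R (π k) (π l) else 0)
      = ∑ i : Fin n, ∑ j : Fin n, ∑ k : Fin n, ∑ l : Fin n, ∑ π : Equiv.Perm (Fin n),
          (if (p i ∧ p j) ∧ (q k ∧ q l) then R (π i) (π j) * R (π k) (π l) else 0) := by
        rw [Finset.sum_comm]
        refine Finset.sum_congr rfl fun i _ => ?_
        rw [Finset.sum_comm]
        refine Finset.sum_congr rfl fun j _ => ?_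
        rw [Finset.sum_comm]
        refine Finset.sum_congr rfl fun k _ => ?_
        rw [Finset.sum_comm]
    _ = ∑ i : Fin n, ∑ j : Fin n, ∑ k : Fin n, ∑ l : Fin n,
          ((if p i ∧ p j ∧ i ≠ j then (1:ℝ) else 0)
            * (if q k ∧ q l ∧ k ≠ l then (1:ℝ) else 0) * ν) := by
        refine Finset.sum_congr rfl fun i _ => Finset.sum_congr rfl fun j _ =>
          Finset.sum_congr rfl fun k _ => Finset.sum_congr rfl fun l _ => ?_
        by_cases hc : (p i ∧ p j) ∧ (q k ∧ q l)
        · by_cases hij : i = j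
          · subst hij
            rw [show (if p i ∧ p i ∧ i ≠ i then (1:ℝ) else 0) = 0 from if_neg (by tauto),
              zero_mul, zero_mul]
            refine Finset.sum_eq_zero fun π _ => ?_
            rw [if_pos hc, hdiag, zero_mul]
          · by_cases hkl : k = l
            · subst hkl
              rw [show (if q k ∧ q k ∧ k ≠ k then (1:ℝ) else 0) = 0 from if_neg (by tauto),
                mul_zero, zero_mul]
              refine Finset.sum_eq_zero fun π _ => ?_
              rw [if_pos hc, hdiag, mul_zero]
            · have hD : D i j k l := by
                refine ⟨hij, ?_, ?_, ?_, ?_, hkl⟩ <;>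
                  · rintro rfl
                    first
                      | exact hpq _ hc.1.1 hc.2.1 | exact hpq _ hc.1.1 hc.2.2
                      | exact hpq _ hc.1.2 hc.2.1 | exact hpq _ hc.1.2 hc.2.2
              rw [if_pos ⟨hc.1.1, hc.1.2, hij⟩, if_pos ⟨hc.2.1, hc.2.2, hkl⟩,
                one_mul, one_mul]
              have : ∀ π : Equiv.Perm (Fin n),
                  (if (p i ∧ p j) ∧ (q k ∧ q l) then R (π i) (π j) * R (π k) (π l) else 0)
                  = R (π i) (π j) * R (π k) (π l) := fun π => if_pos hc
              simp only [this]
              rw [hν, eq_div_iff hnn]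
              linarith [c4_eq hn R i j k l hD]
        · rw [Finset.sum_eq_zero fun π _ => if_neg hc]
          rcases not_and_or.1 hc with h | h
          · rw [show (if p i ∧ p j ∧ i ≠ j then (1:ℝ) else 0) = 0 from if_neg (by tauto),
              zero_mul, zero_mul]
          · rw [show (if q k ∧ q l ∧ k ≠ l then (1:ℝ) else 0) = 0 from if_neg (by tauto),
              mul_zero, zero_mul]
    _ = _ := by
        simp only [← Finset.sum_mul, ← Finset.mul_sum]
        rw [pair_count p 1, pair_count q 1, mul_one, mul_one]


lemma ite_mul_ite (A B : Prop) [Decidable A] [Decidable B] (x y : ℝ) :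
    (if A then x else 0) * (if B then y else 0) = if A ∧ B then x * y else 0 := by
  split_ifs <;> simp_all

lemma card_P1 (t1 t2 : ℕ) (h2n : t2 ≤ n) :
    (univ.filter fun i : Fin n => t1 ≤ (i:ℕ) ∧ (i:ℕ) < t2).card = t2 - t1 := by
  classical
  rw [← Nat.card_Ico t1 t2]
  refine Finset.card_bij' (fun (a : Fin n) _ => (a : ℕ))
    (fun b hb => (⟨b, lt_of_lt_of_le (Finset.mem_Ico.1 hb).2 h2n⟩ : Fin n)) ?_ ?_ ?_ ?_
  · intro a ha
    simp only [Finset.mem_filter] at ha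
    exact Finset.mem_Ico.2 ha.2
  · intro b hb
    simp only [Finset.mem_filter, Finset.mem_univ, true_and]
    exact Finset.mem_Ico.1 hb
  · intro a ha; rfl
  · intro b hb; rfl

lemma card_P2 (t1 t2 : ℕ) (h2n : t2 ≤ n) :
    (univ.filter fun i : Fin n => (i:ℕ) < t1 ∨ t2 ≤ (i:ℕ)).card = n - (t2 - t1) := by
  classical
  have h : (univ.filter fun i : Fin n => (i:ℕ) < t1 ∨ t2 ≤ (i:ℕ))
      = (univ.filter fun i : Fin n => t1 ≤ (i:ℕ) ∧ (i:ℕ) < t2)ᶜ := by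
    ext x
    simp only [Finset.mem_filter, Finset.mem_compl, Finset.mem_univ, true_and]
    omega
  rw [h, Finset.card_compl, card_P1 t1 t2 h2n, Fintype.card_fin]

lemma pcov_expand (f g : Equiv.Perm (Fin n) → ℝ) :
    RING.pcov n f g = RING.pexp n (fun π => f π * g π) - RING.pexp n f * RING.pexp n g := by
  unfold RING.pcov RING.pexp
  have hN : (n.factorial : ℝ) ≠ 0 := Nat.cast_ne_zero.2 n.factorial_ne_zero
  have hcard : (Finset.univ : Finset (Equiv.Perm (Fin n))).card = n.factorial := by
    rw [Finset.card_univ, Fintype.card_perm, Fintype.card_fin]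
  set F := ∑ π : Equiv.Perm (Fin n), f π with hF
  set G := ∑ π : Equiv.Perm (Fin n), g π with hG
  have expand : ∀ π : Equiv.Perm (Fin n),
      (f π - F / (n.factorial : ℝ)) * (g π - G / (n.factorial : ℝ))
      = f π * g π - (G / (n.factorial : ℝ)) * f π - (F / (n.factorial : ℝ)) * g π
        + (F / (n.factorial : ℝ)) * (G / (n.factorial : ℝ)) := fun π => by ring
  simp only [expand]
  rw [Finset.sum_add_distrib, Finset.sum_sub_distrib, Finset.sum_sub_distrib,
    ← Finset.mul_sum, ← Finset.mul_sum, Finset.sum_const, hcard, nsmul_eq_mul,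
    ← hF, ← hG]
  field_simp
  ring

end StmtAux4

set_option maxHeartbeats 2000000 in
/-- Under the permutation null distribution, for all integers `0 ≤ t1 < t2 ≤ n`,
`Cov(U1^π(t1,t2), U2^π(t1,t2)) = A(t2 − t1)·((r_d² − r0²) − 2(n−1)(r1² − r0²))`. -/
theorem stmt4 (n : ℕ) (hn : 4 ≤ n) (R : Fin n → Fin n → ℝ)
    (hsym : ∀ i j, R i j = R j i) (hdiag : ∀ i, R i i = 0)
    (t1 t2 : ℕ) (h12 : t1 < t2) (h2n : t2 ≤ n) :
    pcov n (fun π => U1 n R π t1 t2) (fun π => U2 n R π t1 t2)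
      = A n (t2 - t1)
          * ((rdsq n R - (r0 n R) ^ 2) - 2 * ((n : ℝ) - 1) * (r1sq n R - (r0 n R) ^ 2)) := by
  classical
  have h4 : (4:ℝ) ≤ (n:ℝ) := by exact_mod_cast hn
  have hN : ((n.factorial : ℕ) : ℝ) ≠ 0 := Nat.cast_ne_zero.2 n.factorial_ne_zero
  have hn0 : (n:ℝ) ≠ 0 := ne_of_gt (by linarith)
  have hn1 : (n:ℝ) - 1 ≠ 0 := ne_of_gt (by linarith)
  have hn2 : (n:ℝ) - 2 ≠ 0 := ne_of_gt (by linarith)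
  have hn3 : (n:ℝ) - 3 ≠ 0 := ne_of_gt (by linarith)
  -- sums over permutations
  have hs1 : (∑ π : Equiv.Perm (Fin n), U1 n R π t1 t2)
      = ((t2 - t1 : ℕ) : ℝ) * (((t2 - t1 : ℕ) : ℝ) - 1)
        * ((n.factorial : ℝ) * (∑ x : Fin n, ∑ y : Fin n, R x y)
            / ((n : ℝ) * ((n : ℝ) - 1))) := by
    have e1 : ∀ π : Equiv.Perm (Fin n), U1 n R π t1 t2
        = ∑ i : Fin n, ∑ j : Fin n,
            if (t1 ≤ (i:ℕ) ∧ (i:ℕ) < t2) ∧ (t1 ≤ (j:ℕ) ∧ (j:ℕ) < t2)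
              then R (π i) (π j) else 0 := by
      intro π
      unfold U1
      exact Finset.sum_congr rfl fun i _ => Finset.sum_congr rfl fun j _ =>
        if_congr (by tauto) rfl rfl
    rw [Finset.sum_congr rfl fun π _ => e1 π,
      StmtAux4.sum_perm_double (by omega) R hdiag
        (fun i : Fin n => t1 ≤ (i:ℕ) ∧ (i:ℕ) < t2),
      StmtAux4.card_P1 t1 t2 h2n]
  have hs2 : (∑ π : Equiv.Perm (Fin n), U2 n R π t1 t2)
      = ((n - (t2 - t1) : ℕ) : ℝ) * (((n - (t2 - t1) : ℕ) : ℝ) - 1)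
        * ((n.factorial : ℝ) * (∑ x : Fin n, ∑ y : Fin n, R x y)
            / ((n : ℝ) * ((n : ℝ) - 1))) := by
    have e1 : ∀ π : Equiv.Perm (Fin n), U2 n R π t1 t2
        = ∑ i : Fin n, ∑ j : Fin n,
            if ((i:ℕ) < t1 ∨ t2 ≤ (i:ℕ)) ∧ ((j:ℕ) < t1 ∨ t2 ≤ (j:ℕ))
              then R (π i) (π j) else 0 := fun π => rfl
    rw [Finset.sum_congr rfl fun π _ => e1 π,
      StmtAux4.sum_perm_double (by omega) R hdiag
        (fun i : Fin n => (i:ℕ) < t1 ∨ t2 ≤ (i:ℕ)),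
      StmtAux4.card_P2 t1 t2 h2n]
  have hs12 : (∑ π : Equiv.Perm (Fin n), U1 n R π t1 t2 * U2 n R π t1 t2)
      = ((t2 - t1 : ℕ) : ℝ) * (((t2 - t1 : ℕ) : ℝ) - 1)
        * (((n - (t2 - t1) : ℕ) : ℝ) * (((n - (t2 - t1) : ℕ) : ℝ) - 1))
        * ((n.factorial : ℝ) * StmtAux4.S4 R
            / ((n:ℝ) * ((n:ℝ) - 1) * ((n:ℝ) - 2) * ((n:ℝ) - 3))) := by
    have e1 : ∀ π : Equiv.Perm (Fin n), U1 n R π t1 t2 * U2 n R π t1 t2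
        = ∑ i : Fin n, ∑ j : Fin n, ∑ k : Fin n, ∑ l : Fin n,
            if ((t1 ≤ (i:ℕ) ∧ (i:ℕ) < t2) ∧ (t1 ≤ (j:ℕ) ∧ (j:ℕ) < t2))
                ∧ (((k:ℕ) < t1 ∨ t2 ≤ (k:ℕ)) ∧ ((l:ℕ) < t1 ∨ t2 ≤ (l:ℕ)))
              then R (π i) (π j) * R (π k) (π l) else 0 := by
      intro π
      unfold U1 U2
      rw [Finset.sum_mul]
      refine Finset.sum_congr rfl fun i _ => ?_
      rw [Finset.sum_mul]
      refine Finset.sum_congr rfl fun j _ => ?_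
      rw [Finset.mul_sum]
      refine Finset.sum_congr rfl fun k _ => ?_
      rw [Finset.mul_sum]
      refine Finset.sum_congr rfl fun l _ => ?_
      rw [StmtAux4.ite_mul_ite]
      exact if_congr (by tauto) rfl rfl
    rw [Finset.sum_congr rfl fun π _ => e1 π,
      StmtAux4.sum_perm_quad hn R hdiag
        (fun i : Fin n => t1 ≤ (i:ℕ) ∧ (i:ℕ) < t2)
        (fun i : Fin n => (i:ℕ) < t1 ∨ t2 ≤ (i:ℕ)) (fun x hx hx' => by omega),
      StmtAux4.card_P1 t1 t2 h2n, StmtAux4.card_P2 t1 t2 h2n]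
  rw [StmtAux4.pcov_expand]
  unfold pexp
  rw [hs1, hs2, hs12, StmtAux4.S4_identity R hsym hdiag]
  unfold A rdsq r0 r1sq Rbar
  have hc1 : ((t2 - t1 : ℕ) : ℝ) = (t2:ℝ) - (t1:ℝ) := by
    rw [Nat.cast_sub h12.le]
  have hc2 : ((n - (t2 - t1) : ℕ) : ℝ) = (n:ℝ) - ((t2:ℝ) - (t1:ℝ)) := by
    rw [Nat.cast_sub (by omega), hc1]
  rw [hc1, hc2]
  simp only [div_pow, ← Finset.sum_div]
  set S1 := ∑ x : Fin n, ∑ y : Fin n, R x y with hS1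
  set Srow := ∑ x : Fin n, (∑ y : Fin n, R x y) ^ 2 with hSrow
  set Ssq := ∑ x : Fin n, ∑ y : Fin n, (R x y) ^ 2 with hSsq
  field_simp
  ring
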